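/- Let X₁, X₂, …, X_n be real-valued centered Gaussian random variables (not necessarily independent) on a common probability space, whose variances are all bounded above by σ². Then E[ max_{1 ≤ i ≤ n} |X_i| ] ≤ 2·√(2·log(2n))·σ. -/

import Mathlib

set_option maxHeartbeats 1000000

open MeasureTheory ProbabilityTheory Real

lemma gauss_key (c : ℝ) (v : NNReal) (x : ℝ) :
    gaussianPDFReal 0 v x * Real.exp (c * x)
      = Real.exp (c ^ 2 * v / 2) * gaussianPDFReal (c * v) v x := by
  rcases eq_or_ne v 0 with rfl | hv
  · simp [gaussianPDFReal]
  · have hv' : (v : ℝ) ≠ 0 := by exact_mod_cast hv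
    simp only [gaussianPDFReal, sub_zero]
    have h2 : -x ^ 2 / (2 * (v : ℝ)) + c * x
        = c ^ 2 * (v : ℝ) / 2 + -(x - c * (v : ℝ)) ^ 2 / (2 * (v : ℝ)) := by
      field_simp
      ring
    rw [mul_assoc, ← Real.exp_add, h2, Real.exp_add]
    ring

lemma gauss_density (v : NNReal) (hv : v ≠ 0) :
    gaussianReal 0 v = MeasureTheory.volume.withDensity
      (fun x => ((Real.toNNReal (gaussianPDFReal 0 v x) : NNReal) : ENNReal)) := by
  rw [gaussianReal_of_var_ne_zero 0 hv]
  rfl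

lemma smul_eq_key (c : ℝ) (v : NNReal) :
    (fun x => (Real.toNNReal (gaussianPDFReal 0 v x)) • Real.exp (c * x))
      = fun x => Real.exp (c ^ 2 * v / 2) * gaussianPDFReal (c * v) v x := by
  funext x
  rw [NNReal.smul_def, Real.coe_toNNReal _ (gaussianPDFReal_nonneg _ _ _)]
  exact gauss_key c v x

lemma integrable_exp_gauss (c : ℝ) (v : NNReal) :
    Integrable (fun x => Real.exp (c * x)) (gaussianReal 0 v) := by
  rcases eq_or_ne v 0 with rfl | hv
  · rw [gaussianReal_zero_var]
    have hd : (fun x : ℝ => Real.exp (c * x)) =ᵐ[Measure.dirac (0:ℝ)] fun _ => Real.exp (c * 0) :=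
      ae_eq_dirac (fun x : ℝ => Real.exp (c * x))
    exact (integrable_const _).congr hd.symm
  · rw [gauss_density v hv,
      integrable_withDensity_iff_integrable_smul
        ((measurable_gaussianPDFReal 0 v).real_toNNReal),
      smul_eq_key c v]
    exact (integrable_gaussianPDFReal (c * v) v).const_mul _

lemma integral_exp_gauss (c : ℝ) (v : NNReal) :
    ∫ x, Real.exp (c * x) ∂(gaussianReal 0 v) = Real.exp (c ^ 2 * v / 2) := by
  rcases eq_or_ne v 0 with rfl | hv
  · rw [gaussianReal_zero_var, integral_dirac]
    simp
  · rw [gauss_density v hv,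
      integral_withDensity_eq_integral_smul
        ((measurable_gaussianPDFReal 0 v).real_toNNReal),
      smul_eq_key c v, integral_const_mul, integral_gaussianPDFReal_eq_one _ hv, mul_one]

lemma exp_pull {Ω : Type*} [MeasurableSpace Ω] (P : Measure Ω) (X : Ω → ℝ)
    (hX : Measurable X) (v : NNReal) (h : Measure.map X P = gaussianReal 0 v) (c : ℝ) :
    Integrable (fun ω => Real.exp (c * X ω)) P ∧
      ∫ ω, Real.exp (c * X ω) ∂P = Real.exp (c ^ 2 * v / 2) := by
  have hm : AEStronglyMeasurable (fun x : ℝ => Real.exp (c * x)) (Measure.map X P) :=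
    (Real.measurable_exp.comp (measurable_const_mul c)).aestronglyMeasurable
  constructor
  · exact (integrable_map_measure hm hX.aemeasurable).mp
      (by rw [h]; exact integrable_exp_gauss c v)
  · calc ∫ ω, Real.exp (c * X ω) ∂P
        = ∫ x, Real.exp (c * x) ∂(Measure.map X P) :=
          (integral_map hX.aemeasurable hm).symm
      _ = Real.exp (c ^ 2 * v / 2) := by rw [h]; exact integral_exp_gauss c v

theorem stmt5 {Ω : Type*} [MeasurableSpace Ω] (P : Measure Ω) [IsProbabilityMeasure P]
    (n : ℕ) (hn : 0 < n) (σ : ℝ) (hσ : 0 ≤ σ)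
    (X : Fin n → Ω → ℝ) (hmeas : ∀ i, Measurable (X i))
    (hgauss : ∀ i, ∃ v : NNReal, (v : ℝ) ≤ σ ^ 2 ∧
      Measure.map (X i) P = gaussianReal 0 v) :
    ∫ ω, (Finset.univ.sup' (Finset.univ_nonempty_iff.mpr (Fin.pos_iff_nonempty.mp hn))
        fun i => |X i ω|) ∂P ≤
      2 * Real.sqrt (2 * Real.log (2 * (n:ℝ))) * σ := by
  classical
  set M : Ω → ℝ := fun ω =>
    (Finset.univ.sup' (Finset.univ_nonempty_iff.mpr (Fin.pos_iff_nonempty.mp hn))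
      fun i => |X i ω|) with hMdef
  have hne : (Finset.univ : Finset (Fin n)).Nonempty :=
    Finset.univ_nonempty_iff.mpr (Fin.pos_iff_nonempty.mp hn)
  have i0 : Fin n := ⟨0, hn⟩
  have hM0 : ∀ ω, 0 ≤ M ω := by
    intro ω
    rw [hMdef]
    exact (abs_nonneg (X i0 ω)).trans
      (Finset.le_sup' (fun i => |X i ω|) (Finset.mem_univ i0))
  rcases eq_or_lt_of_le hσ with hσ0 | hσpos
  · -- σ = 0 : all variables a.e. zero
    subst hσ0
    have hv0 : ∀ i, Measure.map (X i) P = gaussianReal 0 0 := by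
      intro i
      obtain ⟨v, hvle, hmap⟩ := hgauss i
      have hv : v = 0 := by
        have h1 : (v : ℝ) ≤ 0 := by simpa using hvle
        have h2 : (v : ℝ) = 0 := le_antisymm h1 v.coe_nonneg
        exact_mod_cast h2
      rwa [hv] at hmap
    have hae : ∀ᵐ ω ∂P, ∀ i, X i ω = 0 := by
      rw [MeasureTheory.ae_all_iff]
      intro i
      have h1 : P (X i ⁻¹' {0}) = 1 := by
        rw [← Measure.map_apply (hmeas i) (measurableSet_singleton 0), hv0 i,
          gaussianReal_zero_var]
        simp
      have h2 : P ((X i ⁻¹' {0})ᶜ) = 0 :=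
        (prob_compl_eq_zero_iff ((hmeas i) (measurableSet_singleton 0))).mpr h1
      have hset : {ω | ¬ X i ω = 0} = (X i ⁻¹' {0})ᶜ := by
        ext ω
        simp
      rw [ae_iff, hset]
      exact h2
    have hM00 : (fun ω => M ω) =ᵐ[P] (fun _ => (0:ℝ)) := by
      refine hae.mono fun ω hω => ?_
      refine le_antisymm (Finset.sup'_le _ _ fun i _ => by simp [hω i]) (hM0 ω)
    rw [integral_congr_ae hM00, integral_const]
    simp
  · -- σ > 0
    choose v hvle hmap using hgauss
    set L := Real.log (2 * (n:ℝ)) with hLdef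
    have hn1 : (1:ℝ) ≤ n := by exact_mod_cast hn
    have hL2 : Real.log 2 ≤ L := Real.log_le_log (by norm_num) (by linarith)
    have h2L1 : (1:ℝ) ≤ 2 * L := by
      have := Real.log_two_gt_d9
      linarith
    have h2L0 : (0:ℝ) ≤ 2 * L := by linarith
    set s := Real.sqrt (2 * L) with hsdef
    have hs1 : 1 ≤ s := by
      rw [hsdef, show (1:ℝ) = Real.sqrt 1 by simp]
      exact Real.sqrt_le_sqrt h2L1
    have hs0 : (0:ℝ) < s := lt_of_lt_of_le one_pos hs1
    have hss : s * s = 2 * L := Real.mul_self_sqrt h2L0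
    set t := s / σ with htdef
    have ht0 : 0 < t := div_pos hs0 hσpos
    have hexpL : Real.exp L = 2 * n := Real.exp_log (by linarith)
    have ht2 : t ^ 2 * σ ^ 2 = 2 * L := by
      rw [htdef]
      field_simp
      nlinarith [hss]
    have hvar : ∀ i, t ^ 2 * (v i : ℝ) / 2 ≤ L := by
      intro i
      nlinarith [hvle i, sq_nonneg t]
    set g : Ω → ℝ := fun ω => ∑ i, (Real.exp (t * X i ω) + Real.exp (-t * X i ω)) with hgdef
    have hInt := fun (i : Fin n) (c : ℝ) => exp_pull P (X i) (hmeas i) (v i) (hmap i) c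
    have hterm_int : ∀ i : Fin n,
        Integrable (fun ω => Real.exp (t * X i ω) + Real.exp (-t * X i ω)) P :=
      fun i => ((hInt i t).1.add (hInt i (-t)).1)
    have hgi : Integrable g P := integrable_finset_sum _ fun i _ => hterm_int i
    have hgint : ∫ ω, g ω ∂P ≤ 4 * (n:ℝ) ^ 2 := by
      rw [hgdef, integral_finset_sum _ fun i _ => hterm_int i]
      have hterm : ∀ i : Fin n,
          ∫ ω, (Real.exp (t * X i ω) + Real.exp (-t * X i ω)) ∂P ≤ 4 * n := by
        intro i
        rw [integral_add (hInt i t).1 (hInt i (-t)).1, (hInt i t).2, (hInt i (-t)).2]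
        have h1 : Real.exp (t ^ 2 * (v i : ℝ) / 2) ≤ 2 * n := by
          rw [← hexpL]
          exact Real.exp_le_exp.mpr (hvar i)
        have h2 : Real.exp ((-t) ^ 2 * (v i : ℝ) / 2) ≤ 2 * n := by
          rw [neg_pow, ← hexpL]
          · exact Real.exp_le_exp.mpr (by simpa using hvar i)
        linarith
      calc ∑ i : Fin n, ∫ ω, (Real.exp (t * X i ω) + Real.exp (-t * X i ω)) ∂P
          ≤ ∑ _i : Fin n, (4 * (n:ℝ)) := Finset.sum_le_sum fun i _ => hterm i
        _ = 4 * (n:ℝ) ^ 2 := by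
            rw [Finset.sum_const, Finset.card_univ, Fintype.card_fin, nsmul_eq_mul]
            ring
    have hta : t * (σ * s) = 2 * L := by
      rw [htdef, ← hss]
      field_simp
    have hpt : ∀ ω, M ω ≤ σ * s + t⁻¹ * Real.exp (-(2 * L)) * g ω := by
      intro ω
      obtain ⟨i, _, hi⟩ := Finset.exists_mem_eq_sup' hne (fun i => |X i ω|)
      have hexpM : Real.exp (t * M ω) ≤ g ω := by
        rw [hMdef]
        simp only
        rw [hi]
        have habs : Real.exp (t * |X i ω|)
            ≤ Real.exp (t * X i ω) + Real.exp (-t * X i ω) := by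
          rcases abs_cases (X i ω) with ⟨h, _⟩ | ⟨h, _⟩
          · rw [h]
            linarith [(Real.exp_pos (-t * X i ω)).le]
          · rw [h, show t * -(X i ω) = -t * X i ω by ring]
            linarith [(Real.exp_pos (t * X i ω)).le]
        refine habs.trans ?_
        exact Finset.single_le_sum
          (f := fun j => Real.exp (t * X j ω) + Real.exp (-t * X j ω))
          (fun j _ => by positivity) (Finset.mem_univ i)
      have key : M ω - σ * s ≤ t⁻¹ * Real.exp (t * (M ω - σ * s)) := by
        have h2 : t * (M ω - σ * s) ≤ Real.exp (t * (M ω - σ * s)) := by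
          linarith [Real.add_one_le_exp (t * (M ω - σ * s))]
        calc M ω - σ * s = t⁻¹ * (t * (M ω - σ * s)) := by
              field_simp
          _ ≤ t⁻¹ * Real.exp (t * (M ω - σ * s)) :=
              mul_le_mul_of_nonneg_left h2 (inv_nonneg.mpr ht0.le)
      have hsplit : Real.exp (t * (M ω - σ * s))
          = Real.exp (-(2 * L)) * Real.exp (t * M ω) := by
        rw [← Real.exp_add]
        congr 1
        rw [mul_sub, hta]
        ring
      have h3 : Real.exp (-(2 * L)) * Real.exp (t * M ω)
          ≤ Real.exp (-(2 * L)) * g ω :=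
        mul_le_mul_of_nonneg_left hexpM (Real.exp_pos _).le
      have h4 := mul_le_mul_of_nonneg_left h3 (inv_nonneg.mpr ht0.le)
      rw [hsplit] at key
      calc M ω = σ * s + (M ω - σ * s) := by ring
        _ ≤ σ * s + t⁻¹ * (Real.exp (-(2 * L)) * Real.exp (t * M ω)) := by linarith
        _ ≤ σ * s + t⁻¹ * Real.exp (-(2 * L)) * g ω := by
            rw [mul_assoc]
            linarith
    have hRHSint : Integrable (fun ω => σ * s + t⁻¹ * Real.exp (-(2 * L)) * g ω) P :=
      (integrable_const _).add (hgi.const_mul _)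
    have hMmeas : Measurable M := by
      rw [hMdef]
      have heq : (fun ω => Finset.univ.sup'
          (Finset.univ_nonempty_iff.mpr (Fin.pos_iff_nonempty.mp hn)) fun i => |X i ω|)
          = Finset.univ.sup' hne (fun i ω => |X i ω|) := by
        funext ω
        rw [Finset.sup'_apply]
      rw [heq]
      exact Finset.measurable_sup' hne (fun i _ => (hmeas i).abs)
    have hint1 : ∫ ω, M ω ∂P ≤ ∫ ω, (σ * s + t⁻¹ * Real.exp (-(2 * L)) * g ω) ∂P :=
      integral_mono_of_nonneg (Filter.Eventually.of_forall hM0) hRHSint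
        (Filter.Eventually.of_forall hpt)
    have hint2 : ∫ ω, (σ * s + t⁻¹ * Real.exp (-(2 * L)) * g ω) ∂P
        = σ * s + t⁻¹ * Real.exp (-(2 * L)) * ∫ ω, g ω ∂P := by
      rw [integral_add (integrable_const _) (hgi.const_mul _), integral_const,
        integral_const_mul, probReal_univ]
      simp
    have hE : Real.exp (-(2 * L)) * (4 * (n:ℝ) ^ 2) = 1 := by
      rw [Real.exp_neg, show (2:ℝ) * L = L + L by ring, Real.exp_add, hexpL,
        show (2 * (n:ℝ)) * (2 * n) = 4 * n ^ 2 by ring]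
      exact inv_mul_cancel₀ (by positivity)
    have hc0 : (0:ℝ) ≤ t⁻¹ * Real.exp (-(2 * L)) := by positivity
    have hfinal : t⁻¹ * Real.exp (-(2 * L)) * ∫ ω, g ω ∂P ≤ t⁻¹ := by
      calc t⁻¹ * Real.exp (-(2 * L)) * ∫ ω, g ω ∂P
          ≤ t⁻¹ * Real.exp (-(2 * L)) * (4 * (n:ℝ) ^ 2) := by
            apply mul_le_mul_of_nonneg_left hgint hc0
        _ = t⁻¹ * 1 := by rw [mul_assoc, hE]
        _ = t⁻¹ := mul_one _
    have hti : t⁻¹ = σ / s := by rw [htdef, inv_div]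
    have hfin2 : σ / s ≤ σ * s := by
      rw [div_le_iff₀ hs0]
      nlinarith
    have : ∫ ω, M ω ∂P ≤ 2 * s * σ := by
      rw [hti] at hfinal
      calc ∫ ω, M ω ∂P ≤ σ * s + t⁻¹ * Real.exp (-(2 * L)) * ∫ ω, g ω ∂P := by
            rw [← hint2]; exact hint1
        _ ≤ σ * s + σ / s := by rw [hti] ; linarith
        _ ≤ 2 * s * σ := by linarith
    exact this
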